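/- arXiv:1605.01805 — 2 statements merged into one kernel-verified Lean document; each statement's English description precedes it below -/
import Mathlib

section
/- For real numbers x ≥ y ≥ 0 and 0 < γ ≤ 1, we have (x+y)^γ ≤ x^γ + γ·y^γ. -/
open Real

theorem stmt0 (x y γ : ℝ) (hy : 0 ≤ y) (hxy : y ≤ x) (hγ0 : 0 < γ) (hγ1 : γ ≤ 1) :
    (x + y) ^ γ ≤ x ^ γ + γ * y ^ γ := by
  rcases eq_or_lt_of_le hy with rfl | hy'
  · simp [Real.zero_rpow hγ0.ne']
  have hx : 0 < x := lt_of_lt_of_le hy' hxy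
  -- h t = t^γ - (t+y)^γ is monotone on [y, ∞)
  have hmono : MonotoneOn (fun t : ℝ => t ^ γ - (t + y) ^ γ) (Set.Ici y) := by
    apply monotoneOn_of_deriv_nonneg (convex_Ici y)
    · apply Continuous.continuousOn
      fun_prop (disch := positivity)
    · intro t ht
      simp only [Set.mem_Ioi, interior_Ici] at ht
      have ht0 : 0 < t := lt_trans hy' ht
      exact (((Real.hasDerivAt_rpow_const (Or.inl ht0.ne')).sub
          ((Real.hasDerivAt_rpow_const (p := γ)
            (Or.inl (by positivity : (0:ℝ) < t + y).ne')).comp t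
            ((hasDerivAt_id t).add_const y))).differentiableAt).differentiableWithinAt
    · intro t ht
      simp only [interior_Ici, Set.mem_Ioi] at ht
      have ht0 : 0 < t := lt_trans hy' ht
      have hty : 0 < t + y := by positivity
      have hd : HasDerivAt (fun t : ℝ => t ^ γ - (t + y) ^ γ)
          (γ * t ^ (γ - 1) - γ * (t + y) ^ (γ - 1) * 1) t := by
        have h2 := ((Real.hasDerivAt_rpow_const (p := γ) (Or.inl hty.ne')).comp t
            ((hasDerivAt_id t).add_const y))
        exact (Real.hasDerivAt_rpow_const (Or.inl ht0.ne')).sub h2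
      rw [hd.deriv]
      rw [mul_one, sub_nonneg]
      apply mul_le_mul_of_nonneg_left _ hγ0.le
      exact Real.rpow_le_rpow_of_nonpos ht0 (le_add_of_nonneg_right hy) (by linarith)
  have key := hmono (Set.self_mem_Ici) (Set.mem_Ici.mpr hxy) hxy
  simp only at key
  -- key : y^γ - (2y)^γ ≤ x^γ - (x+y)^γ
  have hber : (y + y) ^ γ ≤ y ^ γ + γ * y ^ γ := by
    have h2 : ((1:ℝ) + 1) ^ γ ≤ 1 + γ * 1 :=
      rpow_one_add_le_one_add_mul_self (by norm_num) hγ0.le hγ1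
    have : (y + y) ^ γ = ((1:ℝ) + 1) ^ γ * y ^ γ := by
      rw [← Real.mul_rpow (by norm_num) hy]
      ring_nf
    rw [this]
    calc ((1:ℝ) + 1) ^ γ * y ^ γ ≤ (1 + γ * 1) * y ^ γ := by
          apply mul_le_mul_of_nonneg_right h2 (Real.rpow_nonneg hy γ)
      _ = y ^ γ + γ * y ^ γ := by ring
  linarith
end

section
/- Let φ₁ : ℝ → ℝ be twice continuously differentiable with φ₁' bounded, and let φ_ℓ : ℝ → ℝ be twice continuously differentiable satisfying |φ_ℓ''(u)| ≤ ε·ℓ·φ₁'(u) for all u, where ε > 0 and ℓ ∈ ℕ. Then for all t, s ∈ ℝ, |φ_ℓ'(t+s) − φ_ℓ'(t)| ≤ ε·ℓ·|s|·(φ₁'(t) + (1/2)·‖φ₁''‖_∞·|s|). -/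
theorem stmt2 (φ₁ φℓ : ℝ → ℝ) (hφ₁ : ContDiff ℝ 2 φ₁) (hφℓ : ContDiff ℝ 2 φℓ)
    (hφ₁'bdd : ∃ M : ℝ, ∀ u, |deriv φ₁ u| ≤ M)
    (hφ₁''bdd : BddAbove (Set.range fun u => |deriv (deriv φ₁) u|))
    (ε : ℝ) (ℓ : ℕ) (hε : 0 < ε)
    (hφℓ'' : ∀ u, |deriv (deriv φℓ) u| ≤ ε * ℓ * deriv φ₁ u) :
    ∀ t s : ℝ, |deriv φℓ (t + s) - deriv φℓ t| ≤
      ε * ℓ * |s| * (deriv φ₁ t + (1 / 2) * (⨆ u, |deriv (deriv φ₁) u|) * |s|) := by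
  intro t s
  have h2 : (2 : WithTop ℕ∞) = 1 + 1 := by norm_num
  have h1ℓ : ContDiff ℝ 1 (deriv φℓ) := (contDiff_succ_iff_deriv.mp (h2 ▸ hφℓ)).2.2
  have h1 : ContDiff ℝ 1 (deriv φ₁) := (contDiff_succ_iff_deriv.mp (h2 ▸ hφ₁)).2.2
  have hdℓ : Differentiable ℝ (deriv φℓ) := h1ℓ.differentiable one_ne_zero
  have hd1 : Differentiable ℝ (deriv φ₁) := h1.differentiable one_ne_zero
  have hcℓ : Continuous (deriv (deriv φℓ)) := h1ℓ.continuous_deriv le_rfl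
  set K := ⨆ u, |deriv (deriv φ₁) u| with hKdef
  have hKle : ∀ u, |deriv (deriv φ₁) u| ≤ K := fun u => le_ciSup hφ₁''bdd u
  have hK0 : 0 ≤ K := (abs_nonneg _).trans (hKle 0)
  rcases Nat.eq_zero_or_pos ℓ with hℓ | hℓ
  · subst hℓ
    have hzero : ∀ u, deriv (deriv φℓ) u = 0 := fun u => by
      have := hφℓ'' u; simp at this
      exact abs_eq_zero.mp (le_antisymm (by simpa using this) (abs_nonneg _))
    have hconst : deriv φℓ (t + s) = deriv φℓ t :=
      is_const_of_deriv_eq_zero hdℓ hzero (t + s) t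
    simp [hconst]
  · set C := ε * (ℓ : ℝ) with hCdef
    have hC : 0 < C := by positivity
    have hA : 0 ≤ deriv φ₁ t := by
      have h := (abs_nonneg _).trans (hφℓ'' t)
      nlinarith
    have hmvt : ∀ u, deriv φ₁ u ≤ deriv φ₁ t + K * |u - t| := by
      intro u
      have h := Convex.norm_image_sub_le_of_norm_deriv_le (f := deriv φ₁)
        (fun x _ => hd1 x) (fun x _ => by rw [Real.norm_eq_abs]; exact hKle x)
        convex_univ (Set.mem_univ t) (Set.mem_univ u)
      rw [Real.norm_eq_abs, Real.norm_eq_abs] at h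
      have := (le_abs_self (deriv φ₁ u - deriv φ₁ t)).trans h
      linarith
    set g : ℝ → ℝ := fun u => C * (deriv φ₁ t + K * |u - t|) with hgdef
    have hgc : Continuous g := by
      apply continuous_const.mul
      exact continuous_const.add (continuous_const.mul
        (continuous_id.sub continuous_const).abs)
    have hkey : deriv φℓ (t + s) - deriv φℓ t = ∫ u in t..(t + s), deriv (deriv φℓ) u :=
      (intervalIntegral.integral_deriv_eq_sub (fun x _ => hdℓ x)
        (hcℓ.intervalIntegrable _ _)).symm
    have hbd : ‖∫ u in t..(t + s), deriv (deriv φℓ) u‖ ≤ |∫ u in t..(t + s), g u| := by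
      apply intervalIntegral.norm_integral_le_abs_of_norm_le
      · filter_upwards with u
        rw [Real.norm_eq_abs]
        exact (hφℓ'' u).trans (mul_le_mul_of_nonneg_left (hmvt u) hC.le)
      · exact hgc.intervalIntegrable _ _
    have hJ : ∫ u in t..(t + s), |u - t| = s * |s| / 2 := by
      rw [show (∫ u in t..(t + s), |u - t|) = ∫ u in t..(t + s), (fun v => |v|) (u - t) from rfl,
        intervalIntegral.integral_comp_sub_right (fun v => |v|) t]
      simp only [sub_self, add_sub_cancel_left]
      rcases le_or_gt 0 s with h | h
      · rw [intervalIntegral.integral_congr (g := fun x => x)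
          (fun x hx => abs_of_nonneg (by rw [Set.uIcc_of_le h] at hx; exact hx.1)),
          integral_id, abs_of_nonneg h]
        ring
      · rw [intervalIntegral.integral_congr (g := fun x => -x)
          (fun x hx => abs_of_nonpos (by rw [Set.uIcc_of_ge h.le] at hx; exact hx.2)),
          intervalIntegral.integral_neg, integral_id, abs_of_neg h]
        ring
    have hIg : ∫ u in t..(t + s), g u = C * s * (deriv φ₁ t + K * |s| / 2) := by
      rw [hgdef]
      simp only
      rw [intervalIntegral.integral_const_mul,
        intervalIntegral.integral_add (f := fun _ => deriv φ₁ t) (g := fun x => K * |x - t|) (intervalIntegrable_const)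
          ((continuous_const.mul (continuous_sub_right t).abs : Continuous fun x => K * |x - t|).intervalIntegrable _ _),
        intervalIntegral.integral_const, intervalIntegral.integral_const_mul, hJ]
      simp only [smul_eq_mul, add_sub_cancel_left]
      ring
    have habs : |∫ u in t..(t + s), g u| = C * |s| * (deriv φ₁ t + K * |s| / 2) := by
      rw [hIg, abs_mul, abs_mul, abs_of_nonneg hC.le,
        abs_of_nonneg (by positivity : (0:ℝ) ≤ deriv φ₁ t + K * |s| / 2)]
    calc |deriv φℓ (t + s) - deriv φℓ t|
        = ‖∫ u in t..(t + s), deriv (deriv φℓ) u‖ := by rw [hkey, Real.norm_eq_abs]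
      _ ≤ |∫ u in t..(t + s), g u| := hbd
      _ = C * |s| * (deriv φ₁ t + K * |s| / 2) := habs
      _ = ε * ℓ * |s| * (deriv φ₁ t + (1 / 2) * K * |s|) := by rw [hCdef]; ring
end
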